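/- Let G be a group with finite generating set X, and suppose there are constants α ∈ ℤ_{≥0}, λ > 1 and D > C > 0 such that C·n^α·λ^n ≤ |S_{G,X}(n)| ≤ D·n^α·λ^n for all n ≥ 1. For g ∈ G let ℓ̃(g) = min{ |h|_X : h ∈ G, and there exists p ∈ G with g = p⁻¹hp and |g|_X = 2|p|_X + |h|_X } (the minimal length of a conjugate of g realised in a length-additive conjugation). Then for every ε > 0 there exists s ∈ ℤ_{≥0} such that for all sufficiently large n, the number of elements g ∈ B_{G,X}(n) with |g|_X − ℓ̃(g) > 2s is at most ε·|B_{G,X}(n)|. -/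

import Mathlib

/-- The word length of `g` with respect to a generating set `X`: the least `n` such that
`g` is a product of `n` elements of `X ∪ X⁻¹`. -/
noncomputable def wordLength {G : Type*} [Group G] (X : Set G) (g : G) : ℕ :=
  sInf {n | ∃ l : List G, l.length = n ∧ (∀ x ∈ l, x ∈ X ∨ x⁻¹ ∈ X) ∧ l.prod = g}

/-- The sphere of radius `n` in `G` with respect to `X`. -/
noncomputable def sphere {G : Type*} [Group G] (X : Set G) (n : ℕ) : Set G :=
  {g | wordLength X g = n}

/-- The ball of radius `n` in `G` with respect to `X`. -/
noncomputable def ball {G : Type*} [Group G] (X : Set G) (n : ℕ) : Set G :=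
  {g | wordLength X g ≤ n}

/-- The minimal word length of a conjugate of `g` realised in a length-additive
conjugation `g = p⁻¹ h p` with `|g| = 2|p| + |h|`. -/
noncomputable def conjLength {G : Type*} [Group G] (X : Set G) (g : G) : ℕ :=
  sInf {m | ∃ h p : G, g = p⁻¹ * h * p ∧
    wordLength X g = 2 * wordLength X p + wordLength X h ∧ wordLength X h = m}

section Aux

variable {G : Type*} [Group G] {X : Set G}

lemma wordLength_le_length {g : G} {l : List G} (hl : ∀ x ∈ l, x ∈ X ∨ x⁻¹ ∈ X)
    (hp : l.prod = g) : wordLength X g ≤ l.length :=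
  Nat.sInf_le ⟨l, rfl, hl, hp⟩

lemma wordLength_one : wordLength X (1 : G) = 0 :=
  Nat.le_zero.mp (wordLength_le_length (l := []) (by simp) (by simp))

lemma wordLength_spec (hXgen : Subgroup.closure X = ⊤) (g : G) :
    ∃ l : List G, l.length = wordLength X g ∧ (∀ x ∈ l, x ∈ X ∨ x⁻¹ ∈ X) ∧ l.prod = g := by
  have hmem : g ∈ Subgroup.closure X := by rw [hXgen]; exact Subgroup.mem_top g
  have hmem2 : g ∈ Submonoid.closure (X ∪ X⁻¹) := by
    rw [← Subgroup.closure_toSubmonoid]; exact hmem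
  obtain ⟨l, hl, hp⟩ := Submonoid.exists_list_of_mem_closure hmem2
  have hne : {n | ∃ l : List G, l.length = n ∧ (∀ x ∈ l, x ∈ X ∨ x⁻¹ ∈ X) ∧
      l.prod = g}.Nonempty := by
    refine ⟨l.length, l, rfl, fun x hx => ?_, hp⟩
    rcases hl x hx with h | h
    · exact Or.inl h
    · exact Or.inr (Set.mem_inv.mp h)
  exact Nat.sInf_mem hne

lemma ball_finite (hXfin : X.Finite) (hXgen : Subgroup.closure X = ⊤) (n : ℕ) :
    (ball X n).Finite := by
  induction n with
  | zero =>
    refine Set.Finite.subset (Set.finite_singleton 1) fun g hg => ?_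
    obtain ⟨l, hlen, -, hp⟩ := wordLength_spec hXgen g
    have h0 : wordLength X g = 0 := Nat.le_zero.mp hg
    rw [h0] at hlen
    have : l = [] := List.length_eq_zero_iff.mp hlen
    simp [this] at hp
    simp [← hp]
  | succ n ih =>
    refine Set.Finite.subset (((hXfin.union hXfin.inv).insert 1).mul ih) fun g hg => ?_
    obtain ⟨l, hlen, hent, hp⟩ := wordLength_spec hXgen g
    cases l with
    | nil =>
      refine ⟨1, Set.mem_insert _ _, 1, ?_, ?_⟩
      · show wordLength X (1 : G) ≤ n
        simp [wordLength_one]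
      · simp at hp; simp [← hp]
    | cons a t =>
      refine ⟨a, ?_, t.prod, ?_, ?_⟩
      · rcases hent a (by simp) with h | h
        · exact Set.mem_insert_of_mem _ (Set.mem_union_left _ h)
        · exact Set.mem_insert_of_mem _ (Set.mem_union_right _ (Set.mem_inv.mpr h))
      · show wordLength X t.prod ≤ n
        have h1 : wordLength X t.prod ≤ t.length :=
          wordLength_le_length (fun x hx => hent x (List.mem_cons_of_mem _ hx)) rfl
        have h2 : (a :: t).length = wordLength X g := hlen
        have h3 : wordLength X g ≤ n + 1 := hg
        simp only [List.length_cons] at h2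
        omega
      · rw [← hp]; simp [List.prod_cons]

lemma sphere_finite (hXfin : X.Finite) (hXgen : Subgroup.closure X = ⊤) (n : ℕ) :
    (sphere X n).Finite :=
  (ball_finite hXfin hXgen n).subset fun _ hg => le_of_eq hg

lemma sphere_zero (hXgen : Subgroup.closure X = ⊤) : sphere X (0 : ℕ) = ({1} : Set G) := by
  ext g
  constructor
  · intro hg
    obtain ⟨l, hlen, -, hp⟩ := wordLength_spec hXgen g
    have : wordLength X g = 0 := hg
    rw [this] at hlen
    have : l = [] := List.length_eq_zero_iff.mp hlen
    simp [this] at hp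
    simp [← hp]
  · intro hg
    have : g = 1 := hg
    show wordLength X g = 0
    rw [this, wordLength_one]

lemma conjLength_spec (g : G) :
    ∃ h p : G, g = p⁻¹ * h * p ∧
      wordLength X g = 2 * wordLength X p + wordLength X h ∧
      wordLength X h = conjLength X g := by
  have hne : {m | ∃ h p : G, g = p⁻¹ * h * p ∧
      wordLength X g = 2 * wordLength X p + wordLength X h ∧
      wordLength X h = m}.Nonempty :=
    ⟨wordLength X g, g, 1, by simp, by simp [wordLength_one], rfl⟩
  exact Nat.sInf_mem hne

lemma ncard_biUnion_le {ι β : Type*} (s : Finset ι) (t : ι → Set β) :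
    (⋃ i ∈ s, t i).ncard ≤ ∑ i ∈ s, (t i).ncard := by
  classical
  induction s using Finset.induction_on with
  | empty => simp
  | insert a s' h ih =>
    rw [Finset.sum_insert h]
    refine le_trans (le_of_eq (by rw [Finset.set_biUnion_insert])) ?_
    exact le_trans (Set.ncard_union_le _ _) (by omega)

lemma ncard_prod' {β γ : Type*} (s : Set β) (t : Set γ) :
    (s ×ˢ t).ncard = s.ncard * t.ncard := by
  rw [← Nat.card_coe_set_eq, ← Nat.card_coe_set_eq, ← Nat.card_coe_set_eq,
    Nat.card_congr (Equiv.Set.prod s t), Nat.card_prod]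

lemma bad_card_le (hXfin : X.Finite) (hXgen : Subgroup.closure X = ⊤) (s n : ℕ) :
    Nat.card {g : G | g ∈ ball X n ∧ 2 * s < wordLength X g - conjLength X g} ≤
      ∑ k ∈ Finset.Icc (s + 1) (n / 2), Nat.card (sphere X k) * Nat.card (ball X (n - 2 * k)) := by
  classical
  choose hF pF hconj hadd hlen using fun g : G => conjLength_spec (X := X) g
  set Bad := {g : G | g ∈ ball X n ∧ 2 * s < wordLength X g - conjLength X g} with hBad
  set U := ⋃ k ∈ Finset.Icc (s + 1) (n / 2), (sphere X k ×ˢ ball X (n - 2 * k)) with hU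
  have hUfin : U.Finite :=
    Set.Finite.biUnion (Finset.Icc (s + 1) (n / 2)).finite_toSet fun k _ =>
      (sphere_finite hXfin hXgen k).prod (ball_finite hXfin hXgen _)
  have hmaps : ∀ g ∈ Bad, (pF g, hF g) ∈ U := by
    intro g hg
    obtain ⟨hball, hlt⟩ := hg
    have h1 : wordLength X g = 2 * wordLength X (pF g) + wordLength X (hF g) := hadd g
    have h2 : wordLength X (hF g) = conjLength X g := hlen g
    have hgn : wordLength X g ≤ n := hball
    have hk1 : s + 1 ≤ wordLength X (pF g) := by omega
    have hk2 : wordLength X (pF g) ≤ n / 2 := by omega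
    refine Set.mem_biUnion (Finset.mem_Icc.mpr ⟨hk1, hk2⟩) ?_
    refine Set.mem_prod.mpr ⟨rfl, ?_⟩
    show wordLength X (hF g) ≤ n - 2 * wordLength X (pF g)
    omega
  have hinj : Set.InjOn (fun g => (pF g, hF g)) Bad := by
    intro a _ b _ hab
    have h1 : pF a = pF b := congrArg Prod.fst hab
    have h2 : hF a = hF b := congrArg Prod.snd hab
    rw [hconj a, hconj b, h1, h2]
  calc Nat.card Bad = Bad.ncard := Nat.card_coe_set_eq _
    _ = ((fun g => (pF g, hF g)) '' Bad).ncard := (Set.ncard_image_of_injOn hinj).symm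
    _ ≤ U.ncard := Set.ncard_le_ncard (Set.image_subset_iff.mpr hmaps) hUfin
    _ ≤ ∑ k ∈ Finset.Icc (s + 1) (n / 2), (sphere X k ×ˢ ball X (n - 2 * k)).ncard :=
        ncard_biUnion_le _ _
    _ = ∑ k ∈ Finset.Icc (s + 1) (n / 2), Nat.card (sphere X k) * Nat.card (ball X (n - 2 * k)) := by
        refine Finset.sum_congr rfl fun k _ => ?_
        rw [ncard_prod', Nat.card_coe_set_eq, Nat.card_coe_set_eq]

end Aux

theorem statement11 {G : Type*} [Group G] (X : Set G) (hXfin : X.Finite)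
    (hXgen : Subgroup.closure X = ⊤)
    (α : ℕ) (lam C D : ℝ) (hlam : 1 < lam) (hC : 0 < C) (hCD : C < D)
    (hbd : ∀ n : ℕ, 1 ≤ n →
      C * (n : ℝ) ^ α * lam ^ n ≤ (Nat.card (sphere X n) : ℝ) ∧
      (Nat.card (sphere X n) : ℝ) ≤ D * (n : ℝ) ^ α * lam ^ n) :
    ∀ ε : ℝ, 0 < ε → ∃ s : ℕ, ∀ᶠ n : ℕ in Filter.atTop,
      (Nat.card {g : G | g ∈ ball X n ∧ 2 * s < wordLength X g - conjLength X g} : ℝ) ≤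
        ε * (Nat.card (ball X n) : ℝ) := by
  intro ε hε
  have hD : 0 < D := hC.trans hCD
  have hlam0 : (0 : ℝ) < lam := lt_trans one_pos hlam
  set D' : ℝ := max 1 D with hD'
  have hD'0 : (0 : ℝ) < D' := lt_of_lt_of_le one_pos (le_max_left _ _)
  set E : ℝ := D' * lam / (lam - 1) with hE
  have hE0 : 0 < E := by
    apply div_pos (mul_pos hD'0 hlam0); linarith
  -- per-sphere bound
  have hsphere : ∀ j : ℕ, (Nat.card (sphere X j) : ℝ) ≤ D' * ((j : ℝ) + 1) ^ α * lam ^ j := by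
    intro j
    rcases Nat.eq_zero_or_pos j with rfl | hj
    · rw [sphere_zero hXgen]
      simp only [Nat.card_unique, Nat.cast_one, Nat.cast_zero]
      have h1 : (1 : ℝ) ≤ D' := le_max_left _ _
      have h2 : (1 : ℝ) ≤ ((0 : ℝ) + 1) ^ α := by norm_num
      nlinarith
    · refine le_trans ((hbd j hj).2) ?_
      have h2 : D ≤ D' := le_max_right _ _
      gcongr
      linarith
  -- ball upper bound
  have hball : ∀ m : ℕ, (Nat.card (ball X m) : ℝ) ≤ E * ((m : ℝ) + 1) ^ α * lam ^ m := by
    intro m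
    have hsub : ball X m ⊆ ⋃ j ∈ Finset.range (m + 1), sphere X j := by
      intro g hg
      exact Set.mem_biUnion (Finset.mem_range.mpr (Nat.lt_succ_of_le hg)) rfl
    have hcard : Nat.card (ball X m) ≤ ∑ j ∈ Finset.range (m + 1), Nat.card (sphere X j) := by
      calc Nat.card (ball X m) = (ball X m).ncard := Nat.card_coe_set_eq _
        _ ≤ (⋃ j ∈ Finset.range (m + 1), sphere X j).ncard :=
            Set.ncard_le_ncard hsub (Set.Finite.biUnion (Finset.range (m + 1)).finite_toSet
              fun j _ => sphere_finite hXfin hXgen j)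
        _ ≤ ∑ j ∈ Finset.range (m + 1), (sphere X j).ncard := ncard_biUnion_le _ _
        _ = ∑ j ∈ Finset.range (m + 1), Nat.card (sphere X j) := by
            exact Finset.sum_congr rfl fun j _ => (Nat.card_coe_set_eq _).symm
    have step1 : (Nat.card (ball X m) : ℝ) ≤
        ∑ j ∈ Finset.range (m + 1), (Nat.card (sphere X j) : ℝ) := by
      calc (Nat.card (ball X m) : ℝ) ≤
          ((∑ j ∈ Finset.range (m + 1), Nat.card (sphere X j) : ℕ) : ℝ) := by
            exact_mod_cast hcard
        _ = ∑ j ∈ Finset.range (m + 1), (Nat.card (sphere X j) : ℝ) := by push_cast; ring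
    have step2 : ∑ j ∈ Finset.range (m + 1), (Nat.card (sphere X j) : ℝ) ≤
        D' * ((m : ℝ) + 1) ^ α * ∑ j ∈ Finset.range (m + 1), lam ^ j := by
      rw [Finset.mul_sum]
      apply Finset.sum_le_sum
      intro j hj
      refine le_trans (hsphere j) ?_
      have hjm : (j : ℝ) + 1 ≤ (m : ℝ) + 1 := by
        have h := Finset.mem_range.mp hj
        have : (j : ℝ) ≤ (m : ℝ) := by exact_mod_cast Nat.lt_succ_iff.mp h
        linarith
      gcongr
    have step3 : ∑ j ∈ Finset.range (m + 1), lam ^ j ≤ lam ^ (m + 1) / (lam - 1) := by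
      rw [geom_sum_eq (ne_of_gt hlam)]
      apply div_le_div_of_nonneg_right ?_ (by linarith)
      · linarith [pow_pos hlam0 (m + 1)]
    calc (Nat.card (ball X m) : ℝ) ≤ D' * ((m : ℝ) + 1) ^ α *
          ∑ j ∈ Finset.range (m + 1), lam ^ j := le_trans step1 step2
      _ ≤ D' * ((m : ℝ) + 1) ^ α * (lam ^ (m + 1) / (lam - 1)) := by
          apply mul_le_mul_of_nonneg_left step3 (by positivity)
      _ = E * ((m : ℝ) + 1) ^ α * lam ^ m := by
          rw [hE]; field_simp; ring
  -- tail of the series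
  set f : ℕ → ℝ := fun k => (k : ℝ) ^ α * (1 / lam) ^ k with hf
  have hfnonneg : ∀ k, 0 ≤ f k := by
    intro k; apply mul_nonneg (by positivity); positivity
  have hfsum : Summable f := by
    apply summable_pow_mul_geometric_of_norm_lt_one
    rw [norm_div, norm_one, Real.norm_eq_abs, abs_of_pos hlam0]
    rw [div_lt_one hlam0]; exact hlam
  set K : ℝ := D * E * 2 ^ α with hK
  have hK0 : 0 < K := by positivity
  set δ : ℝ := ε * C / K with hδdef
  have hδ : 0 < δ := by positivity
  obtain ⟨s, hs⟩ := Filter.eventually_atTop.mp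
    ((tendsto_order.1 (tendsto_sum_nat_add f)).2 δ hδ)
  refine ⟨s, ?_⟩
  have htail : ∑' k, f (k + (s + 1)) < δ := hs (s + 1) (Nat.le_succ s)
  filter_upwards [Filter.eventually_ge_atTop 1] with n hn
  -- counting bound
  have hcount := bad_card_le (X := X) hXfin hXgen s n
  have hcast : (Nat.card {g : G | g ∈ ball X n ∧ 2 * s < wordLength X g - conjLength X g} : ℝ) ≤
      ∑ k ∈ Finset.Icc (s + 1) (n / 2),
        (Nat.card (sphere X k) : ℝ) * (Nat.card (ball X (n - 2 * k)) : ℝ) := by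
    calc (Nat.card {g : G | g ∈ ball X n ∧ 2 * s < wordLength X g - conjLength X g} : ℝ) ≤
        ((∑ k ∈ Finset.Icc (s + 1) (n / 2),
          Nat.card (sphere X k) * Nat.card (ball X (n - 2 * k)) : ℕ) : ℝ) := by
          exact_mod_cast hcount
      _ = ∑ k ∈ Finset.Icc (s + 1) (n / 2),
          (Nat.card (sphere X k) : ℝ) * (Nat.card (ball X (n - 2 * k)) : ℝ) := by
          push_cast; ring
  -- term bound
  have hterm : ∀ k ∈ Finset.Icc (s + 1) (n / 2),
      (Nat.card (sphere X k) : ℝ) * (Nat.card (ball X (n - 2 * k)) : ℝ) ≤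
        D * E * ((n : ℝ) + 1) ^ α * lam ^ n * f k := by
    intro k hk
    obtain ⟨hk1, hk2⟩ := Finset.mem_Icc.mp hk
    have hk1' : 1 ≤ k := le_trans (Nat.le_add_left 1 s) hk1
    have hk2' : 2 * k ≤ n := by omega
    have hS : (Nat.card (sphere X k) : ℝ) ≤ D * (k : ℝ) ^ α * lam ^ k := (hbd k hk1').2
    have hB : (Nat.card (ball X (n - 2 * k)) : ℝ) ≤
        E * (((n - 2 * k : ℕ) : ℝ) + 1) ^ α * lam ^ (n - 2 * k) := hball (n - 2 * k)
    have hpow1 : (((n - 2 * k : ℕ) : ℝ) + 1) ^ α ≤ ((n : ℝ) + 1) ^ α := by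
      apply pow_le_pow_left₀ (by positivity)
      have : ((n - 2 * k : ℕ) : ℝ) ≤ (n : ℝ) := by exact_mod_cast Nat.sub_le n (2 * k)
      linarith
    have hpow2 : lam ^ k * lam ^ (n - 2 * k) ≤ lam ^ n * (1 / lam) ^ k := by
      have he1 : lam ^ k * lam ^ (n - 2 * k) = lam ^ (k + (n - 2 * k)) := (pow_add lam _ _).symm
      have he2 : lam ^ n * (1 / lam) ^ k = lam ^ (n - k) := by
        rw [one_div, inv_pow, mul_inv_eq_iff_eq_mul₀ (by positivity), ← pow_add]
        congr 1; omega
      rw [he1, he2]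
      apply pow_le_pow_right₀ (le_of_lt hlam)
      omega
    have hSnn : (0 : ℝ) ≤ Nat.card (sphere X k) := Nat.cast_nonneg _
    have hBnn : (0 : ℝ) ≤ Nat.card (ball X (n - 2 * k)) := Nat.cast_nonneg _
    calc (Nat.card (sphere X k) : ℝ) * (Nat.card (ball X (n - 2 * k)) : ℝ)
        ≤ (D * (k : ℝ) ^ α * lam ^ k) * (E * (((n - 2 * k : ℕ) : ℝ) + 1) ^ α *
            lam ^ (n - 2 * k)) := by
          apply mul_le_mul hS hB hBnn
          have : (0 : ℝ) ≤ (k : ℝ) ^ α := by positivity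
          positivity
      _ ≤ (D * (k : ℝ) ^ α * lam ^ k) * (E * ((n : ℝ) + 1) ^ α * lam ^ (n - 2 * k)) := by
          apply mul_le_mul_of_nonneg_left ?_ (by positivity)
          apply mul_le_mul_of_nonneg_right ?_ (by positivity)
          exact mul_le_mul_of_nonneg_left hpow1 (le_of_lt hE0)
      _ = D * E * ((n : ℝ) + 1) ^ α * (k : ℝ) ^ α * (lam ^ k * lam ^ (n - 2 * k)) := by ring
      _ ≤ D * E * ((n : ℝ) + 1) ^ α * (k : ℝ) ^ α * (lam ^ n * (1 / lam) ^ k) := by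
          apply mul_le_mul_of_nonneg_left hpow2
          positivity
      _ = D * E * ((n : ℝ) + 1) ^ α * lam ^ n * f k := by rw [hf]; ring
  have hsum2 : ∑ k ∈ Finset.Icc (s + 1) (n / 2), f k ≤ ∑' k, f (k + (s + 1)) := by
    have heq : ∑ k ∈ Finset.Icc (s + 1) (n / 2), f k =
        ∑ i ∈ Finset.range (n / 2 + 1 - (s + 1)), f ((s + 1) + i) := by
      rw [← Finset.Ico_add_one_right_eq_Icc, Finset.sum_Ico_eq_sum_range]
    rw [heq]
    have hsum' : Summable (fun i => f (i + (s + 1))) := (summable_nat_add_iff (s + 1)).2 hfsum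
    have : ∑ i ∈ Finset.range (n / 2 + 1 - (s + 1)), f ((s + 1) + i) =
        ∑ i ∈ Finset.range (n / 2 + 1 - (s + 1)), f (i + (s + 1)) := by
      exact Finset.sum_congr rfl fun i _ => by rw [Nat.add_comm]
    rw [this]
    exact Summable.sum_le_tsum _ (fun i _ => hfnonneg _) hsum'
  have hchain : (Nat.card {g : G | g ∈ ball X n ∧ 2 * s <
      wordLength X g - conjLength X g} : ℝ) ≤
        D * E * ((n : ℝ) + 1) ^ α * lam ^ n * δ := by
    calc (Nat.card {g : G | g ∈ ball X n ∧ 2 * s < wordLength X g - conjLength X g} : ℝ)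
        ≤ ∑ k ∈ Finset.Icc (s + 1) (n / 2),
            (Nat.card (sphere X k) : ℝ) * (Nat.card (ball X (n - 2 * k)) : ℝ) := hcast
      _ ≤ ∑ k ∈ Finset.Icc (s + 1) (n / 2), D * E * ((n : ℝ) + 1) ^ α * lam ^ n * f k :=
          Finset.sum_le_sum hterm
      _ = D * E * ((n : ℝ) + 1) ^ α * lam ^ n * ∑ k ∈ Finset.Icc (s + 1) (n / 2), f k := by
          rw [Finset.mul_sum]
      _ ≤ D * E * ((n : ℝ) + 1) ^ α * lam ^ n * δ := by
          apply mul_le_mul_of_nonneg_left (le_trans hsum2 (le_of_lt htail))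
          positivity
  -- lower bound for the ball
  have hlow : ε * (C * (n : ℝ) ^ α * lam ^ n) ≤ ε * (Nat.card (ball X n) : ℝ) := by
    apply mul_le_mul_of_nonneg_left ?_ (le_of_lt hε)
    refine le_trans (hbd n hn).1 ?_
    have hsub : sphere X n ⊆ ball X n := fun g hg => le_of_eq hg
    have : Nat.card (sphere X n) ≤ Nat.card (ball X n) := by
      rw [Nat.card_coe_set_eq, Nat.card_coe_set_eq]
      exact Set.ncard_le_ncard hsub (ball_finite hXfin hXgen n)
    exact_mod_cast this
  refine le_trans hchain (le_trans ?_ hlow)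
  -- D * E * (n+1)^α * lam^n * δ ≤ ε * (C * n^α * lam^n)
  have hn1 : (1 : ℝ) ≤ (n : ℝ) := by exact_mod_cast hn
  have hpow3 : ((n : ℝ) + 1) ^ α ≤ 2 ^ α * (n : ℝ) ^ α := by
    rw [← mul_pow]
    apply pow_le_pow_left₀ (by positivity)
    linarith
  have hKδ : K * δ = ε * C := by
    rw [hδdef]; field_simp
  calc D * E * ((n : ℝ) + 1) ^ α * lam ^ n * δ
      ≤ D * E * (2 ^ α * (n : ℝ) ^ α) * lam ^ n * δ := by
        apply mul_le_mul_of_nonneg_right ?_ (le_of_lt hδ)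
        apply mul_le_mul_of_nonneg_right ?_ (by positivity)
        apply mul_le_mul_of_nonneg_left hpow3 (by positivity)
    _ = (K * δ) * ((n : ℝ) ^ α * lam ^ n) := by rw [hK]; ring
    _ = ε * (C * (n : ℝ) ^ α * lam ^ n) := by rw [hKδ]; ring
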